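/- C is PF if and only if C is semiprime and mp. -/
import Mathlib


open CompleteLattice

/-- A complete lattice equipped with a commutator operation, axiomatizing the congruence
lattice of an algebra in a semidegenerate congruence-modular variety whose compact
congruences are closed under the commutator. -/
class CommutatorLattice (C : Type*) [CompleteLattice C] where
  comm : C → C → C
  comm_comm : ∀ a b : C, comm a b = comm b a
  comm_sSup : ∀ (s : Set C) (b : C), comm (sSup s) b = ⨆ a ∈ s, comm a b
  comm_le_inf : ∀ a b : C, comm a b ≤ a ⊓ b
  comm_top : ∀ a : C, comm a ⊤ = a
  compactlyGenerated : ∀ x : C,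
    ∃ s : Set C, (∀ a ∈ s, IsCompactElement a) ∧ sSup s = x
  top_isCompact : IsCompactElement (⊤ : C)
  comm_isCompact : ∀ a b : C, IsCompactElement a → IsCompactElement b →
    IsCompactElement (comm a b)

namespace CommutatorLattice

variable {C : Type*} [CompleteLattice C] [CommutatorLattice C]

/-- The residuation `a → b := ⨆ {c | [a,c] ≤ b}`. -/
def resid (a b : C) : C := sSup {c : C | comm a c ≤ b}

/-- The annihilator `a⊥ := a → ⊥`. -/
def ann (a : C) : C := resid a ⊥

/-- Iterated commutator: `cpow a n = [a,a]^n`, with the convention `[a,a]^0 = a`.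
Note that `[a,b]^n` for `n ≥ 1` equals `cpow (comm a b) (n-1)`. -/
def cpow (a : C) : ℕ → C
  | 0 => a
  | n + 1 => comm (cpow a n) (cpow a n)

/-- Prime elements: `p ≠ ⊤` and `[a,b] ≤ p` implies `a ≤ p` or `b ≤ p`. -/
def IsPrime (p : C) : Prop := p ≠ ⊤ ∧ ∀ a b : C, comm a b ≤ p → a ≤ p ∨ b ≤ p

/-- The radical `ρ(a) := ⨅ {p prime | a ≤ p}`. -/
def radical (a : C) : C := sInf {p : C | IsPrime p ∧ a ≤ p}

variable (C) in
/-- `C` is semiprime if `ρ(⊥) = ⊥`. -/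
def Semiprime : Prop := radical (⊥ : C) = ⊥

variable (C) in
/-- Condition (⋆): for all compact `a`, `b` and all `n ≥ 1` there is `m ≥ 0` with
`[[a,a]^m, [b,b]^m] ≤ [a,b]^n`.  Here `cpow (comm a b) n = [a,b]^(n+1)`, so `n : ℕ`
ranges exactly over the exponents `≥ 1` of the paper. -/
def Star : Prop := ∀ a b : C, IsCompactElement a → IsCompactElement b →
  ∀ n : ℕ, ∃ m : ℕ, comm (cpow a m) (cpow b m) ≤ cpow (comm a b) n

/-- Pure elements: `t ⊔ a⊥ = ⊤` for every compact `a ≤ t`. -/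
def IsPure (t : C) : Prop := ∀ a : C, IsCompactElement a → a ≤ t → t ⊔ ann a = ⊤

/-- w-pure elements: `t ⊔ (a → ρ(⊥)) = ⊤` for every compact `a ≤ t`. -/
def IsWPure (t : C) : Prop :=
  ∀ a : C, IsCompactElement a → a ≤ t → t ⊔ resid a (radical ⊥) = ⊤

/-- Complemented elements. -/
def IsComplEl (a : C) : Prop := ∃ b : C, a ⊔ b = ⊤ ∧ a ⊓ b = ⊥

/-- Regular elements: joins of sets of complemented elements. -/
def IsRegular (t : C) : Prop := ∃ S : Set C, (∀ a ∈ S, IsComplEl a) ∧ t = sSup S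

/-- Max-regular elements: maximal among regular elements distinct from `⊤`. -/
def IsMaxRegular (t : C) : Prop :=
  IsRegular t ∧ t ≠ ⊤ ∧ ∀ u : C, IsRegular u → u ≠ ⊤ → t ≤ u → u = t

/-- Maximal elements of `C \ {⊤}`. -/
def IsMaximal (p : C) : Prop := p ≠ ⊤ ∧ ∀ q : C, q ≠ ⊤ → p ≤ q → q = p

/-- Minimal primes. -/
def IsMinPrime (p : C) : Prop := IsPrime p ∧ ∀ q : C, IsPrime q → q ≤ p → q = p

variable (C) in
/-- `C` is mp if every prime lies above a unique minimal prime. -/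
def MP : Prop := ∀ p : C, IsPrime p → ∃! q : C, IsMinPrime q ∧ q ≤ p

variable (C) in
/-- `C` is PF if `a⊥` is pure for every compact `a`. -/
def PF : Prop := ∀ a : C, IsCompactElement a → IsPure (ann a)

variable (C) in
/-- `C` is PP if `a⊥` is complemented for every compact `a`. -/
def PP : Prop := ∀ a : C, IsCompactElement a → IsComplEl (ann a)

/-- `O(p) := ⨆ {a compact | a⊥ ≰ p}`. -/
def O (p : C) : C := sSup {a : C | IsCompactElement a ∧ ¬ ann a ≤ p}

variable (C) in
/-- `C` is normal. -/
def Normal : Prop := ∀ t u : C, t ⊔ u = ⊤ →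
  ∃ a b : C, t ⊔ a = ⊤ ∧ u ⊔ b = ⊤ ∧ comm a b = ⊥

variable (C) in
/-- `C` is B-normal. -/
def BNormal : Prop := ∀ t u : C, t ⊔ u = ⊤ →
  ∃ a b : C, IsComplEl a ∧ IsComplEl b ∧ t ⊔ a = ⊤ ∧ u ⊔ b = ⊤ ∧ comm a b = ⊥

variable (C) in
/-- `C` is purified. -/
def Purified : Prop := ∀ p q : C, IsMinPrime p → IsMinPrime q → p ≠ q →
  ∃ a : C, IsComplEl a ∧ a ≤ p ∧ ann a ≤ q

variable (C) in
/-- The prime spectrum of `C`. -/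
abbrev Spec := {p : C // IsPrime p}

variable (C) in
/-- The Zariski topology on `Spec C`: the closed sets are the `V(t) = {p | t ≤ p}`,
equivalently the topology generated by the sets `D(t) = {p | t ≰ p}`. -/
def zariskiTop : TopologicalSpace (Spec C) :=
  TopologicalSpace.generateFrom {U : Set (Spec C) | ∃ t : C, U = {p : Spec C | ¬ t ≤ p.1}}

variable (C) in
/-- The flat topology on `Spec C`: generated by the open basis `V(a)`, `a` compact. -/
def flatTop : TopologicalSpace (Spec C) :=
  TopologicalSpace.generateFrom
    {U : Set (Spec C) | ∃ a : C, IsCompactElement a ∧ U = {p : Spec C | a ≤ p.1}}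


/-- Closure of `{a} ∪ {compact c | ¬ c ≤ q}` under the commutator. -/
inductive ClMem (a q : C) : C → Prop
  | base : ClMem a q a
  | of_nle (c : C) : IsCompactElement c → ¬ c ≤ q → ClMem a q c
  | comm (u v : C) : ClMem a q u → ClMem a q v → ClMem a q (CommutatorLattice.comm u v)

section Proofs

/-! ### Basic lemmas about the commutator -/

lemma comm_sup_left (a b c : C) : comm (a ⊔ b) c = comm a c ⊔ comm b c := by
  have h := comm_sSup ({a, b} : Set C) c
  rw [sSup_pair] at h
  rw [h, iSup_pair]

lemma comm_mono_left {a b : C} (h : a ≤ b) (c : C) : comm a c ≤ comm b c := by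
  have h2 : comm (a ⊔ b) c = comm a c ⊔ comm b c := comm_sup_left a b c
  rw [sup_eq_right.mpr h] at h2
  rw [h2]
  exact le_sup_left

lemma comm_mono_right (a : C) {b c : C} (h : b ≤ c) : comm a b ≤ comm a c := by
  rw [comm_comm a b, comm_comm a c]
  exact comm_mono_left h a

lemma comm_mono {a b c d : C} (h1 : a ≤ b) (h2 : c ≤ d) : comm a c ≤ comm b d :=
  (comm_mono_left h1 c).trans (comm_mono_right b h2)

lemma comm_bot (b : C) : comm (⊥ : C) b = ⊥ := by
  have h := comm_sSup (∅ : Set C) b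
  simpa using h

lemma le_resid_iff {a b c : C} : c ≤ resid a b ↔ comm a c ≤ b := by
  constructor
  · intro h
    have h2 : comm a (resid a b) ≤ b := by
      rw [comm_comm, resid, comm_sSup]
      exact iSup₂_le fun x hx => le_of_le_of_eq (le_of_eq (comm_comm x a)) rfl |>.trans hx
    exact (comm_mono_right a h).trans h2
  · exact fun h => le_sSup h

lemma le_ann_iff {a b : C} : b ≤ ann a ↔ comm a b = ⊥ := by
  rw [ann, le_resid_iff, le_bot_iff]

lemma comm_ann (a : C) : comm a (ann a) = ⊥ := le_ann_iff.mp le_rfl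

lemma ann_antitone {a b : C} (h : a ≤ b) : ann b ≤ ann a :=
  le_ann_iff.mpr (le_bot_iff.mp ((comm_mono_left h (ann b)).trans_eq (comm_ann b)))

lemma ann_bot : ann (⊥ : C) = ⊤ :=
  eq_top_iff.mpr (le_ann_iff.mpr (comm_bot ⊤))

lemma le_of_forall_compact_le {x y : C} (h : ∀ c, IsCompactElement c → c ≤ x → c ≤ y) :
    x ≤ y := by
  obtain ⟨s, hs, rfl⟩ := compactlyGenerated x
  exact sSup_le fun a ha => h a (hs a ha) (le_sSup ha)

lemma exists_compact_not_le {x y : C} (h : ¬ x ≤ y) :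
    ∃ c, IsCompactElement c ∧ c ≤ x ∧ ¬ c ≤ y := by
  by_contra hc
  push_neg at hc
  exact h (le_of_forall_compact_le fun c h1 h2 => hc c h1 h2)

/-! ### cpow lemmas -/

lemma cpow_isCompact {a : C} (ha : IsCompactElement a) : ∀ n, IsCompactElement (cpow a n)
  | 0 => ha
  | n + 1 => comm_isCompact _ _ (cpow_isCompact ha n) (cpow_isCompact ha n)

lemma cpow_succ_le (a : C) (n : ℕ) : cpow a (n + 1) ≤ cpow a n :=
  (comm_le_inf _ _).trans inf_le_left

lemma cpow_antitone (a : C) {m n : ℕ} (h : m ≤ n) : cpow a n ≤ cpow a m := by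
  induction h with
  | refl => exact le_rfl
  | step _ ih => exact (cpow_succ_le a _).trans ih

/-! ### Primes -/

lemma prime_ann_le {p a : C} (hp : IsPrime p) (h : ¬ a ≤ p) : ann a ≤ p :=
  (hp.2 a (ann a) (le_of_eq_of_le (comm_ann a) bot_le)).resolve_left h

/-! ### Semiprime lemmas -/

lemma Semiprime.eq_bot_of_comm_self (sp : Semiprime C) {a : C} (h : comm a a = ⊥) :
    a = ⊥ := by
  have h1 : a ≤ radical ⊥ :=
    le_sInf fun p hp => ((hp.1.2 a a ((le_of_eq h).trans bot_le))).elim id id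
  rw [sp] at h1
  exact le_bot_iff.mp h1

lemma Semiprime.inf_eq_bot (sp : Semiprime C) {u v : C} (h : comm u v = ⊥) : u ⊓ v = ⊥ :=
  sp.eq_bot_of_comm_self
    (le_bot_iff.mp ((comm_mono inf_le_left inf_le_right).trans h.le))

lemma Semiprime.le_ann_iff_inf (sp : Semiprime C) {x w : C} : x ≤ ann w ↔ w ⊓ x = ⊥ :=
  ⟨fun h => sp.inf_eq_bot (le_ann_iff.mp h),
   fun h => le_ann_iff.mpr (le_bot_iff.mp ((comm_le_inf w x).trans h.le))⟩

/-! ### The Zorn prime-avoidance lemma -/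

lemma exists_prime_of_comm_closed (S : Set C) (hne : S.Nonempty)
    (hcomp : ∀ s ∈ S, IsCompactElement s)
    (hcl : ∀ u ∈ S, ∀ v ∈ S, ∃ w ∈ S, w ≤ comm u v)
    {z : C} (hz : ∀ s ∈ S, ¬ s ≤ z) :
    ∃ m : C, IsPrime m ∧ z ≤ m ∧ ∀ s ∈ S, ¬ s ≤ m := by
  have hch : ∀ c ⊆ {x : C | ∀ s ∈ S, ¬ s ≤ x}, IsChain (· ≤ ·) c → ∀ y ∈ c,
      ∃ ub ∈ {x : C | ∀ s ∈ S, ¬ s ≤ x}, ∀ z ∈ c, z ≤ ub := by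
    intro c hcsub hchain y hy
    refine ⟨sSup c, ?_, fun t ht => le_sSup ht⟩
    intro s hs hle
    obtain ⟨x, hx, hsx⟩ := (isCompactElement_iff_le_of_directed_sSup_le C s).mp
      (hcomp s hs) c ⟨y, hy⟩ hchain.directedOn hle
    exact hcsub hx s hs hsx
  obtain ⟨m, hzm, hmax⟩ := zorn_le_nonempty₀ {x : C | ∀ s ∈ S, ¬ s ≤ x} hch z hz
  · refine ⟨m, ⟨?_, ?_⟩, hzm, hmax.1⟩
    · obtain ⟨s, hs⟩ := hne
      intro h
      exact hmax.1 s hs (le_of_le_of_eq le_top h.symm)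
    · intro x y hxy
      by_contra hcon
      push_neg at hcon
      obtain ⟨hx, hy⟩ := hcon
      have h1 : ∃ s ∈ S, s ≤ m ⊔ x := by
        by_contra h
        push_neg at h
        exact hx (le_sup_right.trans (hmax.2 h le_sup_left))
      have h2 : ∃ s ∈ S, s ≤ m ⊔ y := by
        by_contra h
        push_neg at h
        exact hy (le_sup_right.trans (hmax.2 h le_sup_left))
      obtain ⟨s1, hs1, hs1le⟩ := h1
      obtain ⟨s2, hs2, hs2le⟩ := h2
      obtain ⟨w, hwS, hwle⟩ := hcl s1 hs1 s2 hs2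
      apply hmax.1 w hwS
      have hfin : comm (m ⊔ x) (m ⊔ y) ≤ m := by
        rw [comm_sup_left]
        apply sup_le ((comm_le_inf m (m ⊔ y)).trans inf_le_left)
        rw [comm_comm x (m ⊔ y), comm_sup_left]
        apply sup_le ((comm_le_inf m x).trans inf_le_left)
        rw [comm_comm y x]
        exact hxy
      exact (hwle.trans (comm_mono hs1le hs2le)).trans hfin

lemma exists_prime_ge {z : C} (hz : z ≠ ⊤) : ∃ m, IsPrime m ∧ z ≤ m := by
  obtain ⟨m, hm, hzm, _⟩ := exists_prime_of_comm_closed ({⊤} : Set C) ⟨⊤, rfl⟩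
    (fun s hs => by rw [Set.mem_singleton_iff] at hs; rw [hs]; exact top_isCompact)
    (fun u hu v hv => by
      rw [Set.mem_singleton_iff] at hu hv
      exact ⟨⊤, rfl, by rw [hu, hv, comm_top]⟩)
    (z := z) (fun s hs h => by
      rw [Set.mem_singleton_iff] at hs
      rw [hs] at h
      exact hz (top_le_iff.mp h))
  exact ⟨m, hm, hzm⟩

/-! ### Minimal primes -/

lemma sInf_chain_isPrime {c : Set C} (hc : ∀ q ∈ c, IsPrime q) (hne : c.Nonempty)
    (hchain : IsChain (· ≤ ·) c) : IsPrime (sInf c) := by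
  obtain ⟨r0, hr0⟩ := hne
  constructor
  · intro h
    have h1 := sInf_le hr0
    rw [h] at h1
    exact (hc r0 hr0).1 (top_le_iff.mp h1)
  · intro x y hxy
    by_cases hx : x ≤ sInf c
    · exact Or.inl hx
    right
    rw [le_sInf_iff] at hx
    push_neg at hx
    obtain ⟨r, hr, hxr⟩ := hx
    apply _root_.le_sInf
    intro r' hr'
    by_cases hrr : r = r'
    · subst hrr
      exact ((hc r hr).2 x y (hxy.trans (sInf_le hr))).resolve_left hxr
    rcases hchain hr hr' hrr with h | h
    · exact (((hc r hr).2 x y (hxy.trans (sInf_le hr))).resolve_left hxr).trans h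
    · exact ((hc r' hr').2 x y (hxy.trans (sInf_le hr'))).resolve_left
        (fun hxr' => hxr (hxr'.trans h))

lemma exists_minPrime_le {p : C} (hp : IsPrime p) : ∃ q, IsMinPrime q ∧ q ≤ p := by
  have hch : ∀ c ⊆ {x : Cᵒᵈ | IsPrime (OrderDual.ofDual x) ∧ OrderDual.ofDual x ≤ p},
      IsChain (· ≤ ·) c → ∀ y ∈ c,
      ∃ ub ∈ {x : Cᵒᵈ | IsPrime (OrderDual.ofDual x) ∧ OrderDual.ofDual x ≤ p},
        ∀ z ∈ c, z ≤ ub := by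
    intro c hcsub hchain y hy
    have hchain' : IsChain (· ≤ ·) (OrderDual.ofDual '' c) := by
      rintro _ ⟨u, hu, rfl⟩ _ ⟨v, hv, rfl⟩ hne2
      rcases hchain hu hv (fun h => hne2 (congrArg _ h)) with h | h
      · exact Or.inr h
      · exact Or.inl h
    have hne' : (OrderDual.ofDual '' c).Nonempty := ⟨OrderDual.ofDual y, y, hy, rfl⟩
    have hprimes : ∀ q ∈ OrderDual.ofDual '' c, IsPrime q := by
      rintro _ ⟨u, hu, rfl⟩
      exact (hcsub hu).1
    refine ⟨OrderDual.toDual (InfSet.sInf (OrderDual.ofDual '' c)),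
      ⟨sInf_chain_isPrime hprimes hne' hchain', ?_⟩, ?_⟩
    · exact (_root_.sInf_le (s := OrderDual.ofDual '' c) ⟨y, hy, rfl⟩).trans (hcsub hy).2
    · intro t ht
      exact _root_.sInf_le (s := OrderDual.ofDual '' c) ⟨t, ht, rfl⟩
  obtain ⟨m, _, hmax⟩ := zorn_le_nonempty₀ (α := Cᵒᵈ)
    {x : Cᵒᵈ | IsPrime (OrderDual.ofDual x) ∧ OrderDual.ofDual x ≤ p} hch
    (OrderDual.toDual p) ⟨hp, le_rfl⟩
  refine ⟨OrderDual.ofDual m, ⟨hmax.1.1, ?_⟩, hmax.1.2⟩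
  intro q hq hqm
  exact le_antisymm hqm (hmax.2 (y := OrderDual.toDual q) ⟨hq, hqm.trans hmax.1.2⟩ hqm)

/-! ### The key lemma: primes below a prime containing an annihilator -/

variable (C) in
/-- Auxiliary: `e` is "good" for `q` if `x ⊓ e ≤ q` implies `x ≤ q`. -/
def Good (q e : C) : Prop := ∀ x : C, x ⊓ e ≤ q → x ≤ q

lemma good_top (q : C) : Good C q ⊤ := fun x hx => by simpa using hx

lemma good_of_not_le {q e : C} (hq : IsPrime q) (he : ¬ e ≤ q) : Good C q e := fun x hx =>
  (hq.2 x e ((comm_le_inf x e).trans hx)).resolve_right he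

lemma Good.inf {q e f : C} (he : Good C q e) (hf : Good C q f) : Good C q (e ⊓ f) :=
  fun x hx => he x (hf (x ⊓ e) (by rwa [inf_assoc]))

lemma ann_inf_le_of_good (sp : Semiprime C) {q a e : C} (he : Good C q e) (ha : ann a ≤ q) :
    ann (a ⊓ e) ≤ q := by
  have h0 : (a ⊓ e) ⊓ ann (a ⊓ e) = ⊥ := sp.le_ann_iff_inf.mp le_rfl
  apply he
  refine le_trans ?_ ha
  rw [sp.le_ann_iff_inf]
  refine le_bot_iff.mp (le_trans ?_ h0.le)
  exact le_inf (le_inf inf_le_left (inf_le_right.trans inf_le_right))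
    (inf_le_right.trans inf_le_left)

lemma clMem_invariant (sp : Semiprime C) {q a : C} (hq : IsPrime q) (ha : IsCompactElement a)
    {w : C} (hw : ClMem a q w) :
    IsCompactElement w ∧ ∃ e : C, Good C q e ∧ ann w ≤ ann (a ⊓ e) := by
  induction hw with
  | base => exact ⟨ha, ⊤, good_top q, by rw [inf_top_eq]⟩
  | of_nle c hc hcq => exact ⟨hc, c, good_of_not_le hq hcq, ann_antitone inf_le_right⟩
  | comm u v hu hv ihu ihv =>
      obtain ⟨hcu, e1, he1, h1⟩ := ihu
      obtain ⟨hcv, e2, he2, h2⟩ := ihv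
      refine ⟨comm_isCompact u v hcu hcv, e1 ⊓ e2, he1.inf he2, ?_⟩
      rw [sp.le_ann_iff_inf]
      set x := ann (comm u v) with hxdef
      have hx : x ⊓ (u ⊓ v) = ⊥ := by
        have h0 : comm u v ⊓ x = ⊥ := sp.le_ann_iff_inf.mp le_rfl
        apply sp.eq_bot_of_comm_self
        apply le_bot_iff.mp
        refine le_trans (le_inf ?_ ?_) h0.le
        · exact comm_mono (inf_le_right.trans inf_le_left) (inf_le_right.trans inf_le_right)
        · exact (comm_le_inf _ _).trans (inf_le_left.trans inf_le_left)
      have hxv : (a ⊓ e1) ⊓ (x ⊓ v) = ⊥ := by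
        have huxv : x ⊓ v ≤ ann u := by
          rw [sp.le_ann_iff_inf]
          refine le_bot_iff.mp (le_trans ?_ hx.le)
          exact le_inf (inf_le_right.trans inf_le_left)
            (le_inf inf_le_left (inf_le_right.trans inf_le_right))
        exact sp.le_ann_iff_inf.mp (huxv.trans h1)
      have hxa : (a ⊓ e2) ⊓ (x ⊓ (a ⊓ e1)) = ⊥ := by
        have hvx : x ⊓ (a ⊓ e1) ≤ ann v := by
          rw [sp.le_ann_iff_inf]
          refine le_bot_iff.mp (le_trans ?_ hxv.le)
          exact le_inf (inf_le_right.trans inf_le_right)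
            (le_inf (inf_le_right.trans inf_le_left) inf_le_left)
        exact sp.le_ann_iff_inf.mp (hvx.trans h2)
      refine le_bot_iff.mp (le_trans ?_ hxa.le)
      exact le_inf
        (le_inf (inf_le_left.trans inf_le_left)
          (inf_le_left.trans (inf_le_right.trans inf_le_right)))
        (le_inf inf_le_right
          (le_inf (inf_le_left.trans inf_le_left)
            (inf_le_left.trans (inf_le_right.trans inf_le_left))))

lemma exists_prime_le_not_le (sp : Semiprime C) {q a : C} (hq : IsPrime q)
    (ha : IsCompactElement a) (hann : ann a ≤ q) :
    ∃ m, IsPrime m ∧ m ≤ q ∧ ¬ a ≤ m := by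
  have hinv : ∀ w ∈ {w : C | ClMem a q w}, IsCompactElement w ∧ ann w ≤ q := by
    intro w hw
    obtain ⟨hc, e, he, hle⟩ := clMem_invariant sp hq ha hw
    exact ⟨hc, hle.trans (ann_inf_le_of_good sp he hann)⟩
  have hz : ∀ s ∈ {w : C | ClMem a q w}, ¬ s ≤ (⊥ : C) := by
    intro s hs hle
    have h2 : ann s ≤ q := (hinv s hs).2
    rw [le_bot_iff] at hle
    rw [hle, ann_bot] at h2
    exact hq.1 (top_le_iff.mp h2)
  obtain ⟨m, hm, -, hS⟩ := exists_prime_of_comm_closed {w : C | ClMem a q w}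
    ⟨a, ClMem.base⟩ (fun s hs => (hinv s hs).1)
    (fun u hu v hv => ⟨comm u v, ClMem.comm u v hu hv, le_rfl⟩) hz
  refine ⟨m, hm, ?_, hS a ClMem.base⟩
  apply le_of_forall_compact_le
  intro c hc hcm
  by_contra hcq
  exact hS c (ClMem.of_nle c hc hcq) hcm

/-! ### PF implies semiprime -/

lemma PF.comm_self_eq_bot (h : PF C) {a : C} (ha : IsCompactElement a)
    (hb : comm a a = ⊥) : a = ⊥ := by
  have h1 : a ≤ ann a := le_ann_iff.mpr hb
  have h2 : ann a ⊔ ann a = ⊤ := h a ha a ha h1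
  rw [sup_idem] at h2
  have h3 := comm_ann a
  rw [h2, comm_top] at h3
  exact h3

lemma PF.semiprime (h : PF C) : Semiprime C := by
  rw [Semiprime, ← le_bot_iff]
  apply le_of_forall_compact_le
  intro c hc hcr
  by_cases hn : ∃ n, cpow c n = ⊥
  · obtain ⟨n, hn⟩ := hn
    suffices hcb : c = ⊥ by rw [hcb]
    clear hcr
    induction n with
    | zero => exact hn
    | succ k ih =>
        apply ih
        exact h.comm_self_eq_bot (cpow_isCompact hc k) hn
  · push_neg at hn
    obtain ⟨p, hp, -, hS⟩ := exists_prime_of_comm_closed (Set.range (cpow c))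
      ⟨c, 0, rfl⟩
      (by rintro s ⟨n, rfl⟩; exact cpow_isCompact hc n)
      (by
        rintro u ⟨i, rfl⟩ v ⟨j, rfl⟩
        refine ⟨cpow c (max i j + 1), ⟨max i j + 1, rfl⟩, ?_⟩
        exact comm_mono (cpow_antitone c (le_max_left i j))
          (cpow_antitone c (le_max_right i j)))
      (z := (⊥ : C))
      (by rintro s ⟨n, rfl⟩ hle; exact hn n (le_bot_iff.mp hle))
    exact absurd (hcr.trans (sInf_le ⟨hp, bot_le⟩)) (hS c ⟨0, rfl⟩)

end Proofs

theorem statement15 : PF C ↔ Semiprime C ∧ MP C := by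
  constructor
  · intro hPF
    have sp := hPF.semiprime
    refine ⟨sp, ?_⟩
    intro p hp
    obtain ⟨q, hq, hqp⟩ := exists_minPrime_le hp
    refine ⟨q, ⟨hq, hqp⟩, ?_⟩
    rintro q' ⟨hq', hq'p⟩
    by_contra hne
    have h1 : ¬ q' ≤ q := fun h => hne (hq.2 q' hq'.1 h)
    obtain ⟨a, ha, haq', haq⟩ := exists_compact_not_le h1
    have hannq' : ¬ ann a ≤ q' := by
      intro hann
      obtain ⟨m, hm, hmq', ham⟩ := exists_prime_le_not_le sp hq'.1 ha hann
      have := hq'.2 m hm hmq'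
      rw [← this] at haq'
      exact ham haq'
    obtain ⟨b, hb, hba, hbq'⟩ := exists_compact_not_le hannq'
    have hpure : ann a ⊔ ann b = ⊤ := hPF a ha b hb hba
    have h2 : ann a ≤ q := prime_ann_le hq.1 haq
    have h3 : ann b ≤ q' := prime_ann_le hq'.1 hbq'
    have h4 : (⊤ : C) ≤ p := by
      rw [← hpure]
      exact sup_le (h2.trans hqp) (h3.trans hq'p)
    exact hp.1 (top_le_iff.mp h4)
  · rintro ⟨sp, hmp⟩
    intro a ha b hb hba
    by_contra hne
    obtain ⟨m, hm, hzm⟩ := exists_prime_ge hne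
    have h1 : ann a ≤ m := le_sup_left.trans hzm
    have h2 : ann b ≤ m := le_sup_right.trans hzm
    obtain ⟨p1, hp1, hp1m, hap1⟩ := exists_prime_le_not_le sp hm ha h1
    obtain ⟨p2, hp2, hp2m, hbp2⟩ := exists_prime_le_not_le sp hm hb h2
    obtain ⟨r1, hr1, hr1p1⟩ := exists_minPrime_le hp1
    obtain ⟨r2, hr2, hr2p2⟩ := exists_minPrime_le hp2
    obtain ⟨r, hr, hru⟩ := hmp m hm
    have e1 : r1 = r := hru r1 ⟨hr1, hr1p1.trans hp1m⟩
    have e2 : r2 = r := hru r2 ⟨hr2, hr2p2.trans hp2m⟩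
    have hab : comm a b = ⊥ := le_ann_iff.mp hba
    rcases hr.1.1.2 a b ((le_of_eq hab).trans bot_le) with h | h
    · rw [← e1] at h
      exact hap1 (h.trans hr1p1)
    · rw [← e2] at h
      exact hbp2 (h.trans hr2p2)


end CommutatorLattice
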